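/- For the collapsed bilinear map, the smaller eigenvalue λ₂ of G satisfies c r² ≤ λ₂ ≤ C r² near the singular point, where r = (x² + (y−1)²)^{1/2}, for some constants 0 < c ≤ C; in particular λ₂ → 0 as (x,y) → (0,1) at quadratic rate. -/
import Mathlib


/-- The smaller eigenvalue of the metric tensor
`G = (1/2)[[y²−2y+2, xy−x+1],[xy−x+1, x²+1]]` of the collapsed bilinear map,
given by `λ₂ = T/2 − ((T/2)² − det G)^(1/2)` with `T = trace G`. -/
noncomputable def bilinLam2 (x y : ℝ) : ℝ :=
  let T : ℝ := ((y ^ 2 - 2 * y + 2) + (x ^ 2 + 1)) / 2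
  let d : ℝ := (1 / 4 : ℝ) * ((y ^ 2 - 2 * y + 2) * (x ^ 2 + 1) - (x * y - x + 1) ^ 2)
  T / 2 - Real.sqrt ((T / 2) ^ 2 - d)

/-- Near the singular point `(0,1)`, the smaller eigenvalue `λ₂` of the collapsed
bilinear map's metric tensor satisfies `c r² ≤ λ₂ ≤ C r²`, where
`r = (x² + (y−1)²)^(1/2)`, for some constants `0 < c ≤ C`; in particular
`λ₂ → 0` as `(x,y) → (0,1)` at quadratic rate. -/
theorem bilinear_lam2_quadratic_rate :
    ∃ c C r₀ : ℝ, 0 < c ∧ c ≤ C ∧ 0 < r₀ ∧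
      ∀ x y : ℝ, x ∈ Set.Icc (0:ℝ) 1 → y ∈ Set.Icc (0:ℝ) 1 →
        Real.sqrt (x ^ 2 + (y - 1) ^ 2) < r₀ →
          c * (x ^ 2 + (y - 1) ^ 2) ≤ bilinLam2 x y ∧
          bilinLam2 x y ≤ C * (x ^ 2 + (y - 1) ^ 2) := by
  refine ⟨1/6, 1, 1/2, by norm_num, by norm_num, by norm_num, ?_⟩
  intro x y hx hy hr
  obtain ⟨hx0, hx1⟩ := hx
  obtain ⟨hy0, hy1⟩ := hy
  set s : ℝ := x ^ 2 + (y - 1) ^ 2 with hs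
  have hs0 : 0 ≤ s := by positivity
  have hs14 : s < 1/4 := by
    have := Real.sq_sqrt hs0
    nlinarith [Real.sqrt_nonneg s]
  -- unfold bilinLam2
  have hA : ((y ^ 2 - 2 * y + 2) + (x ^ 2 + 1)) / 2 / 2 = (s + 2) / 4 := by
    simp only [hs]; ring
  have hdval : (1 / 4 : ℝ) * ((y ^ 2 - 2 * y + 2) * (x ^ 2 + 1) - (x * y - x + 1) ^ 2)
      = (x - y + 1) ^ 2 / 4 := by ring
  set A : ℝ := (s + 2) / 4 with hAdef
  set d : ℝ := (x - y + 1) ^ 2 / 4 with hddef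
  have hlam : bilinLam2 x y = A - Real.sqrt (A ^ 2 - d) := by
    simp only [bilinLam2, hA, hdval]
  have hd_lb : s / 4 ≤ d := by
    have hxy : 0 ≤ x * (1 - y) := mul_nonneg hx0 (by linarith)
    simp only [hddef, hs]; nlinarith
  have hd_ub : d ≤ s / 2 := by
    simp only [hddef, hs]; nlinarith [sq_nonneg (x + y - 1)]
  constructor
  · -- lower bound: s/6 ≤ A - sqrt(A² - d)  ⟺  sqrt(A² - d) ≤ A - s/6
    rw [hlam]
    have h1 : Real.sqrt (A ^ 2 - d) ≤ A - s / 6 := by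
      have h2 : A ^ 2 - d ≤ (A - s / 6) ^ 2 := by
        simp only [hAdef]; nlinarith
      calc Real.sqrt (A ^ 2 - d) ≤ Real.sqrt ((A - s / 6) ^ 2) :=
            Real.sqrt_le_sqrt h2
        _ = A - s / 6 := by
            rw [Real.sqrt_sq (by simp only [hAdef]; nlinarith)]
    linarith
  · -- upper bound: A - sqrt(A² - d) ≤ s  ⟺  A - s ≤ sqrt(A² - d)
    rw [hlam]
    have h1 : A - s ≤ Real.sqrt (A ^ 2 - d) := by
      have h2 : (A - s) ^ 2 ≤ A ^ 2 - d := by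
        simp only [hAdef]
        nlinarith [mul_nonneg hs0 (by linarith : (0:ℝ) ≤ 1 - s), hd_ub]
      calc A - s = Real.sqrt ((A - s) ^ 2) := by
            rw [Real.sqrt_sq (by simp only [hAdef]; linarith)]
        _ ≤ Real.sqrt (A ^ 2 - d) := Real.sqrt_le_sqrt h2
    linarith
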